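/- If G is a connected graph of order n and i is any vertex of G, then the average size of a connected vertex set of G containing i is at least (n+1)/2; that is, S(G,i) ≥ ((n+1)/2)·N(G,i), where N(G,i) is the number of connected sets containing i and S(G,i) is the sum of their sizes. -/

import Mathlib

open Finset Filter

attribute [local instance] Classical.propDecidable

noncomputable def connSets {V : Type*} [Fintype V] (G : SimpleGraph V) : Finset (Finset V) :=
  Finset.univ.filter fun U => U.Nonempty ∧ (G.induce (U : Set V)).Connected

namespace AvgConnAux

open SimpleGraph

variable {V : Type*} (G : SimpleGraph V)

/-- reachability within a finite set of vertices -/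
def reachIn (R : Finset V) (a b : V) : Prop :=
  ∃ w : G.Walk a b, ∀ v ∈ w.support, v ∈ R

variable {G}

theorem reachIn.refl {R : Finset V} {a : V} (ha : a ∈ R) : reachIn G R a a :=
  ⟨Walk.nil, by simp [ha]⟩

theorem reachIn.symm {R : Finset V} {a b : V} (h : reachIn G R a b) : reachIn G R b a := by
  obtain ⟨w, hw⟩ := h
  exact ⟨w.reverse, by simpa using hw⟩

theorem reachIn.trans {R : Finset V} {a b c : V} (h : reachIn G R a b) (h' : reachIn G R b c) :
    reachIn G R a c := by
  obtain ⟨w, hw⟩ := h; obtain ⟨w', hw'⟩ := h'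
  refine ⟨w.append w', fun v hv => ?_⟩
  rw [Walk.mem_support_append_iff] at hv
  exact hv.elim (hw v) (hw' v)

theorem reachIn.mono {R R' : Finset V} {a b : V} (hR : R ⊆ R') (h : reachIn G R a b) :
    reachIn G R' a b := by
  obtain ⟨w, hw⟩ := h; exact ⟨w, fun v hv => hR (hw v hv)⟩

theorem reachIn.mem_left {R : Finset V} {a b : V} (h : reachIn G R a b) : a ∈ R := by
  obtain ⟨w, hw⟩ := h; exact hw a w.start_mem_support

/-- the connectivity predicate used in the problem statement -/
def connF (G : SimpleGraph V) (U : Finset V) : Prop :=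
  U.Nonempty ∧ (G.induce (U : Set V)).Connected

theorem reachable_induce_of_reachIn {U : Finset V} {a b : V} (W : G.Walk a b) :
    (∀ v ∈ W.support, v ∈ U) → ∀ (ha : a ∈ (U : Set V)) (hb : b ∈ (U : Set V)),
      (G.induce (U : Set V)).Reachable ⟨a, ha⟩ ⟨b, hb⟩ := by
  induction W with
  | nil => intro _ ha hb; exact Reachable.refl _
  | @cons u v w h p ih =>
    intro hsup ha hb
    have hv : v ∈ U := hsup v (by simp [Walk.support_cons])
    have hadj : (G.induce (U : Set V)).Adj ⟨u, ha⟩ ⟨v, hv⟩ := by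
      simp only [comap_adj, Function.Embedding.coe_subtype]
      exact h
    exact (hadj.reachable).trans (ih (fun x hx => hsup x (by simp [Walk.support_cons, hx])) hv hb)

theorem connF_iff (U : Finset V) :
    connF G U ↔ (U.Nonempty ∧ ∀ a ∈ U, ∀ b ∈ U, reachIn G U a b) := by
  constructor
  · rintro ⟨hne, hconn⟩
    refine ⟨hne, fun a ha b hb => ?_⟩
    obtain ⟨p⟩ := hconn.preconnected ⟨a, by simpa using ha⟩ ⟨b, by simpa using hb⟩
    refine ⟨p.map (SimpleGraph.Embedding.induce (U : Set V)).toHom, fun v hv => ?_⟩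
    erw [Walk.support_map, List.mem_map] at hv
    obtain ⟨⟨x, hx⟩, _, rfl⟩ := hv
    simpa using hx
  · rintro ⟨hne, hreach⟩
    obtain ⟨a0, ha0⟩ := hne
    haveI : Nonempty ↑(U : Set V) := ⟨⟨a0, by simpa using ha0⟩⟩
    refine ⟨⟨a0, ha0⟩, ?_⟩
    constructor
    rintro ⟨a, ha⟩ ⟨b, hb⟩
    obtain ⟨w, hw⟩ := hreach a (by simpa using ha) b (by simpa using hb)
    exact reachable_induce_of_reachIn w hw ha hb

theorem connF.reach {U : Finset V} (h : connF G U) {a b : V} (ha : a ∈ U) (hb : b ∈ U) :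
    reachIn G U a b := ((connF_iff U).1 h).2 a ha b hb

theorem connF_of_reach {U : Finset V} {y : V} (hy : y ∈ U)
    (h : ∀ v ∈ U, reachIn G U y v) : connF G U := by
  refine (connF_iff U).2 ⟨⟨y, hy⟩, fun a ha b hb => (h a ha).symm.trans (h b hb)⟩

/-- prefix to the first occurrence of `c`: reach a neighbour of `c` avoiding `c` -/
theorem reach_prefix {R : Finset V} {a b : V} (W : G.Walk a b) :
    (∀ v ∈ W.support, v ∈ R) → ∀ c, c ∈ W.support → c ≠ a →
      ∃ d, G.Adj d c ∧ reachIn G (R.erase c) a d := by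
  induction W with
  | nil =>
    intro _ c hc hca
    rw [Walk.support_nil, List.mem_singleton] at hc
    exact absurd hc hca
  | @cons u v w h p ih =>
    intro hsup c hc hca
    have hu : u ∈ R := hsup u (by simp [Walk.support_cons])
    rw [Walk.support_cons, List.mem_cons] at hc
    rcases hc with hc | hc
    · exact absurd hc hca
    · by_cases hcv : c = v
      · subst hcv
        refine ⟨u, h, Walk.nil, ?_⟩
        intro x hx
        rw [Walk.support_nil, List.mem_singleton] at hx
        subst hx
        exact Finset.mem_erase.2 ⟨(Ne.symm hca), hu⟩
      · obtain ⟨d, hd, ⟨Wp, hWp⟩⟩ :=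
          ih (fun x hx => hsup x (by simp [Walk.support_cons, hx])) c hc hcv
        refine ⟨d, hd, Walk.cons h Wp, ?_⟩
        intro x hx
        rw [Walk.support_cons, List.mem_cons] at hx
        rcases hx with rfl | hx
        · exact Finset.mem_erase.2 ⟨Ne.symm hca, hu⟩
        · exact hWp x hx

/-- first exit of a walk out of a set `U` -/
theorem first_exit {U : Finset V} {a b : V} (W : G.Walk a b) :
    a ∈ U → b ∉ U → ∃ y ∈ W.support, y ∉ U ∧ ∃ z ∈ U, G.Adj z y := by
  induction W with
  | nil => intro ha hb; exact absurd ha hb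
  | @cons u v w h p ih =>
    intro ha hb
    by_cases hv : v ∈ U
    · obtain ⟨y, hy, hyU, z, hz, hadj⟩ := ih hv hb
      exact ⟨y, by simp [Walk.support_cons, hy], hyU, z, hz, hadj⟩
    · exact ⟨v, by simp [Walk.support_cons], hv, u, ha, h⟩

noncomputable def dIn (G : SimpleGraph V) (R : Finset V) (a b : V) : ℕ :=
  sInf {n | ∃ w : G.Walk a b, (∀ v ∈ w.support, v ∈ R) ∧ w.length = n}

theorem dIn_le {R : Finset V} {a b : V} (W : G.Walk a b) (h : ∀ v ∈ W.support, v ∈ R) :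
    dIn G R a b ≤ W.length := Nat.sInf_le ⟨W, h, rfl⟩

theorem exists_dIn_walk {R : Finset V} {a b : V} (h : reachIn G R a b) :
    ∃ W : G.Walk a b, (∀ v ∈ W.support, v ∈ R) ∧ W.length = dIn G R a b := by
  obtain ⟨w, hw⟩ := h
  exact Nat.sInf_mem (⟨w.length, w, hw, rfl⟩ :
    Set.Nonempty {n | ∃ w : G.Walk a b, (∀ v ∈ w.support, v ∈ R) ∧ w.length = n})

/-- In a connected set `R`, every component of `R ∖ {y}` contains a vertex whose
removal keeps `R` connected. -/
theorem exists_noncut {R : Finset V} {y z0 : V} (hR : connF G R) (hy : y ∈ R)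
    (hz0 : z0 ∈ R.erase y) :
    ∃ w ∈ R.erase y, reachIn G (R.erase y) z0 w ∧ connF G (R.erase w) := by
  set K := (R.erase y).filter (fun v => reachIn G (R.erase y) z0 v) with hKdef
  have hz0K : z0 ∈ K := Finset.mem_filter.2 ⟨hz0, reachIn.refl hz0⟩
  obtain ⟨w, hwK, hmax⟩ := K.exists_max_image (dIn G R y) ⟨z0, hz0K⟩
  have hwRy : w ∈ R.erase y := (Finset.mem_filter.1 hwK).1
  have hwreach : reachIn G (R.erase y) z0 w := (Finset.mem_filter.1 hwK).2
  have hwy : w ≠ y := (Finset.mem_erase.1 hwRy).1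
  have hyRw : y ∈ R.erase w := Finset.mem_erase.2 ⟨Ne.symm hwy, hy⟩
  refine ⟨w, hwRy, hwreach, connF_of_reach hyRw ?_⟩
  intro v hv
  obtain ⟨hvw, hvR⟩ := Finset.mem_erase.1 hv
  by_cases hvy : v = y
  · subst hvy; exact reachIn.refl hyRw
  by_cases hvK : v ∈ K
  · -- a minimum length walk from y to v inside R avoids w
    obtain ⟨Wv, hWsup, hWlen⟩ := exists_dIn_walk (hR.reach hy hvR)
    have hwsupp : w ∉ Wv.support := by
      intro hws
      have h1 : dIn G R y w ≤ (Wv.takeUntil w hws).length :=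
        dIn_le _ (fun x hx => hWsup x (Wv.support_takeUntil_subset hws hx))
      have h2 : (Wv.takeUntil w hws).length + (Wv.dropUntil w hws).length = Wv.length := by
        have h := congrArg Walk.length (Wv.take_spec hws)
        rw [Walk.length_append] at h
        exact h
      have h3 : 1 ≤ (Wv.dropUntil w hws).length := by
        rcases Nat.eq_zero_or_pos (Wv.dropUntil w hws).length with h0 | h0
        · exact absurd (Walk.eq_of_length_eq_zero h0).symm hvw
        · exact h0
      have h4 : dIn G R y v ≤ dIn G R y w := hmax v hvK
      omega
    exact ⟨Wv, fun x hx => Finset.mem_erase.2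
      ⟨fun heq => hwsupp (heq ▸ hx), hWsup x hx⟩⟩
  · -- v is in another component of R ∖ {y}; a bypass path from y avoids w
    obtain ⟨W0, hW0⟩ := hR.reach hy hvR
    have hPpath : W0.bypass.IsPath := W0.bypass_isPath
    have hPsup : ∀ x ∈ W0.bypass.support, x ∈ R :=
      fun x hx => hW0 x (W0.support_bypass_subset hx)
    have hwP : w ∉ W0.bypass.support := by
      intro hws
      have hyP : y ∉ (W0.bypass.dropUntil w hws).support := by
        intro hyd
        have hnd2 : (((W0.bypass.takeUntil w hws).append
            (W0.bypass.dropUntil w hws)).support).Nodup := by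
          rw [W0.bypass.take_spec hws]; exact hPpath.support_nodup
        rw [Walk.support_append] at hnd2
        have hdisj := List.disjoint_of_nodup_append hnd2
        have hytake : y ∈ (W0.bypass.takeUntil w hws).support :=
          (W0.bypass.takeUntil w hws).start_mem_support
        have hytail : y ∈ (W0.bypass.dropUntil w hws).support.tail := by
          have hc := (W0.bypass.dropUntil w hws).support_eq_cons
          rw [hc, List.mem_cons] at hyd
          rcases hyd with h | h
          · exact absurd h.symm hwy
          · exact h
        exact hdisj hytake hytail
      have hreachwv : reachIn G (R.erase y) w v :=
        ⟨W0.bypass.dropUntil w hws, fun x hx => Finset.mem_erase.2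
          ⟨fun h => hyP (h ▸ hx), hPsup x (W0.bypass.support_dropUntil_subset hws hx)⟩⟩
      exact hvK (Finset.mem_filter.2 ⟨Finset.mem_erase.2 ⟨hvy, hvR⟩, hwreach.trans hreachwv⟩)
    exact ⟨W0.bypass, fun x hx => Finset.mem_erase.2
      ⟨fun h => hwP (h ▸ hx), hPsup x hx⟩⟩

/-- No vertex outside `insert x S` can be removed from `R` keeping it connected. -/
def Stuck (G : SimpleGraph V) (R S : Finset V) (x : V) : Prop :=
  ∀ w ∈ R, w ∉ insert x S → ¬ connF G (R.erase w)

theorem stuck_reach_special {R S : Finset V} {x : V} (hR : connF G R)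
    (hstuck : Stuck G R S x) {y z : V} (hy : y ∈ R) (hyn : y ∉ insert x S)
    (hz : z ∈ R.erase y) : ∃ w ∈ insert x S, reachIn G (R.erase y) z w := by
  obtain ⟨w, hwRy, hwreach, hwconn⟩ := exists_noncut hR hy hz
  by_cases h : w ∈ insert x S
  · exact ⟨w, h, hwreach⟩
  · exact absurd hwconn (hstuck w (Finset.mem_erase.1 hwRy).2 h)

theorem star_a {R S : Finset V} {x : V} (hR : connF G R) (hx : x ∈ R)
    (hS : S ⊆ R.erase x) (hstuck : Stuck G R S x) {u : V} (hu : u ∈ S) {U : Finset V}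
    (hUconn : connF G U) (hUR : U ⊆ R.erase u) (hxU : x ∈ U) (hSU : S.erase u ⊆ U)
    {y : V} (hyR : y ∈ R) (hyU : y ∉ U) (hyu : y ≠ u) :
    ¬ reachIn G (R.erase y) u x := by
  intro hux
  have hyn : y ∉ insert x S := by
    intro h
    rcases Finset.mem_insert.1 h with rfl | h'
    · exact hyU hxU
    · exact hyU (hSU (Finset.mem_erase.2 ⟨hyu, h'⟩))
  have hUsub : U ⊆ R.erase y := fun s hs =>
    Finset.mem_erase.2 ⟨fun h => hyU (h ▸ hs), (Finset.mem_erase.1 (hUR hs)).2⟩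
  have hall : ∀ z ∈ R.erase y, reachIn G (R.erase y) z x := by
    intro z hz
    obtain ⟨w, hw, hreach⟩ := stuck_reach_special hR hstuck hyR hyn hz
    rcases Finset.mem_insert.1 hw with rfl | hwS
    · exact hreach
    · by_cases hwu : w = u
      · subst hwu; exact hreach.trans hux
      · exact hreach.trans ((hUconn.reach (hSU (Finset.mem_erase.2 ⟨hwu, hwS⟩)) hxU).mono hUsub)
  have hxRy : x ∈ R.erase y := hUsub hxU
  exact hstuck y hyR hyn (connF_of_reach hxRy (fun v hv => (hall v hv).symm))

theorem bnd_unique {R S : Finset V} {x : V} (hR : connF G R) (hx : x ∈ R)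
    (hS : S ⊆ R.erase x) (hstuck : Stuck G R S x) {u : V} (hu : u ∈ S) {U : Finset V}
    (hUconn : connF G U) (hUR : U ⊆ R.erase u) (hxU : x ∈ U) (hSU : S.erase u ⊆ U)
    {y₁ y₂ : V} (h1R : y₁ ∈ R) (h1U : y₁ ∉ U) (h1b : ∃ z ∈ U, G.Adj z y₁)
    (h2R : y₂ ∈ R) (h2U : y₂ ∉ U) (h2b : ∃ z ∈ U, G.Adj z y₂) : y₁ = y₂ := by
  by_contra hne
  have hUR' : U ⊆ R := fun s hs => (Finset.mem_erase.1 (hUR hs)).2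
  have huR : u ∈ R := (Finset.mem_erase.1 (hS hu)).2
  -- the case where one of the two boundary vertices is `u` itself
  have hucase : ∀ b : V, b ≠ u → b ∈ R → b ∉ U → (∃ z ∈ U, G.Adj z u) → False := by
    intro b hb hbR hbU hza
    obtain ⟨z, hzU, hadj⟩ := hza
    have hna := star_a hR hx hS hstuck hu hUconn hUR hxU hSU hbR hbU hb
    apply hna
    have hUsub : U ⊆ R.erase b := fun s hs =>
      Finset.mem_erase.2 ⟨fun h => hbU (h ▸ hs), hUR' hs⟩
    have huRb : u ∈ R.erase b := Finset.mem_erase.2 ⟨Ne.symm hb, huR⟩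
    have h1 : reachIn G (R.erase b) u z := by
      refine ⟨Walk.cons hadj.symm Walk.nil, ?_⟩
      intro t ht
      rw [Walk.support_cons, Walk.support_nil, List.mem_cons, List.mem_singleton] at ht
      rcases ht with rfl | rfl
      · exact huRb
      · exact hUsub hzU
    exact h1.trans ((hUconn.reach hzU hxU).mono hUsub)
  rcases eq_or_ne y₁ u with h1u | h1u
  · rcases eq_or_ne y₂ u with h2u | h2u
    · exact hne (h1u.trans h2u.symm)
    · exact hucase y₂ h2u h2R h2U (h1u ▸ h1b)
  · rcases eq_or_ne y₂ u with h2u | h2u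
    · exact hucase y₁ h1u h1R h1U (h2u ▸ h2b)
    · -- main case: both boundary vertices differ from u
      obtain ⟨z₁, hz₁U, hadj₁⟩ := h1b
      obtain ⟨z₂, hz₂U, hadj₂⟩ := h2b
      have hna1 := star_a hR hx hS hstuck hu hUconn hUR hxU hSU h1R h1U h1u
      have hna2 := star_a hR hx hS hstuck hu hUconn hUR hxU hSU h2R h2U h2u
      obtain ⟨W, hWsup⟩ := hR.reach huR hx
      have hy₂W : y₂ ∈ W.support := by
        by_contra hns
        exact hna2 ⟨W, fun t ht => Finset.mem_erase.2 ⟨fun h => hns (h ▸ ht), hWsup t ht⟩⟩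
      obtain ⟨d, hdadj, W1r⟩ := reach_prefix W hWsup y₂ hy₂W h2u
      obtain ⟨W1, hW1sup⟩ := W1r
      obtain ⟨WU, hWUsup⟩ := hUconn.reach hz₂U hxU
      have hbigsup : ∀ t ∈ (W1.append (Walk.cons hdadj (Walk.cons hadj₂.symm WU))).support,
          t ∈ R := by
        intro t ht
        rw [Walk.mem_support_append_iff] at ht
        rcases ht with ht | ht
        · exact (Finset.mem_erase.1 (hW1sup t ht)).2
        · rw [Walk.support_cons, List.mem_cons] at ht
          rcases ht with rfl | ht
          · exact (Finset.mem_erase.1 (hW1sup t W1.end_mem_support)).2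
          · rw [Walk.support_cons, List.mem_cons] at ht
            rcases ht with rfl | ht
            · exact h2R
            · exact hUR' (hWUsup t ht)
      have hy₁big : y₁ ∈ (W1.append (Walk.cons hdadj (Walk.cons hadj₂.symm WU))).support := by
        by_contra hns
        exact hna1 ⟨_, fun t ht => Finset.mem_erase.2
          ⟨fun h => hns (h ▸ ht), hbigsup t ht⟩⟩
      have hy₁W1 : y₁ ∈ W1.support := by
        rw [Walk.mem_support_append_iff] at hy₁big
        rcases hy₁big with h | h
        · exact h
        · rw [Walk.support_cons, List.mem_cons] at h
          rcases h with rfl | h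
          · exact W1.end_mem_support
          · exfalso
            rw [Walk.support_cons, List.mem_cons] at h
            rcases h with rfl | h
            · exact hne rfl
            · exact h1U (hWUsup _ h)
      obtain ⟨d', hd'adj, W2r⟩ := reach_prefix W1 hW1sup y₁ hy₁W1 h1u
      apply hna2
      have hy₁R2 : y₁ ∈ R.erase y₂ := Finset.mem_erase.2 ⟨hne, h1R⟩
      have hUsub2 : U ⊆ R.erase y₂ := fun s hs =>
        Finset.mem_erase.2 ⟨fun h => h2U (h ▸ hs), hUR' hs⟩
      have step1 : reachIn G (R.erase y₂) u y₁ := by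
        obtain ⟨W2, hW2⟩ := W2r
        have hstepA : reachIn G (R.erase y₂) u d' :=
          ⟨W2, fun t ht => Finset.mem_of_mem_erase (hW2 t ht)⟩
        refine hstepA.trans ⟨Walk.cons hd'adj Walk.nil, ?_⟩
        intro t ht
        rw [Walk.support_cons, Walk.support_nil, List.mem_cons, List.mem_singleton] at ht
        rcases ht with rfl | rfl
        · exact Finset.mem_of_mem_erase (hW2 _ (W2.end_mem_support))
        · exact hy₁R2
      have step2 : reachIn G (R.erase y₂) y₁ x := by
        obtain ⟨WU1, hWU1⟩ := hUconn.reach hz₁U hxU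
        refine ⟨Walk.cons hadj₁.symm WU1, ?_⟩
        intro t ht
        rw [Walk.support_cons, List.mem_cons] at ht
        rcases ht with rfl | ht
        · exact hy₁R2
        · exact hUsub2 (hWU1 t ht)
      exact step1.trans step2

noncomputable def Cset (G : SimpleGraph V) (R S : Finset V) (x : V) : Finset (Finset V) :=
  R.powerset.filter (fun U => connF G U ∧ insert x S ⊆ U)

theorem mem_Cset {R S : Finset V} {x : V} {U : Finset V} :
    U ∈ Cset G R S x ↔ U ⊆ R ∧ connF G U ∧ insert x S ⊆ U := by
  simp [Cset]

theorem stuck_Cset {R S : Finset V} {x : V} (hR : connF G R) (hx : x ∈ R)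
    (hS : S ⊆ R.erase x) (hstuck : Stuck G R S x) : Cset G R S x = {R} := by
  ext U
  rw [mem_Cset, Finset.mem_singleton]
  constructor
  · rintro ⟨hUR, hUconn, hins⟩
    by_contra hne
    have hnsub : ¬ R ⊆ U := fun h => hne (Finset.Subset.antisymm hUR h)
    obtain ⟨y, hyR, hyU⟩ := Finset.not_subset.1 hnsub
    have hyn : y ∉ insert x S := fun h => hyU (hins h)
    have hUsub : U ⊆ R.erase y := fun s hs =>
      Finset.mem_erase.2 ⟨fun h => hyU (h ▸ hs), hUR hs⟩
    have hxU : x ∈ U := hins (Finset.mem_insert_self x S)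
    apply hstuck y hyR hyn
    apply connF_of_reach (hUsub hxU)
    intro z hz
    obtain ⟨w, hw, hreach⟩ := stuck_reach_special hR hstuck hyR hyn hz
    exact (hreach.trans ((hUconn.reach (hins hw) hxU).mono hUsub)).symm
  · rintro rfl
    exact ⟨Finset.Subset.refl _, hR,
      Finset.insert_subset_iff.2 ⟨hx, fun s hs => (Finset.mem_erase.1 (hS hs)).2⟩⟩

noncomputable def bndry (G : SimpleGraph V) (U R : Finset V) (x : V) : V :=
  if h : ∃ y, y ∈ R ∧ y ∉ U ∧ ∃ z ∈ U, G.Adj z y then h.choose else x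

theorem bndry_spec {U R : Finset V} {x : V}
    (h : ∃ y, y ∈ R ∧ y ∉ U ∧ ∃ z ∈ U, G.Adj z y) :
    (bndry G U R x) ∈ R ∧ (bndry G U R x) ∉ U ∧ ∃ z ∈ U, G.Adj z (bndry G U R x) := by
  rw [bndry, dif_pos h]
  exact h.choose_spec

theorem stuck_sum {R S : Finset V} {x : V} (hR : connF G R) (hx : x ∈ R)
    (hS : S ⊆ R.erase x) (hstuck : Stuck G R S x) :
    ∑ u ∈ S, (Cset G (R.erase u) (S.erase u) x).card ≤ (R.erase x).card := by
  rw [← Finset.card_sigma]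
  have hfacts : ∀ p ∈ S.sigma (fun u => Cset G (R.erase u) (S.erase u) x),
      p.1 ∈ S ∧ p.2 ⊆ R.erase p.1 ∧ connF G p.2 ∧ x ∈ p.2 ∧ S.erase p.1 ⊆ p.2 ∧
      (∃ y, y ∈ R ∧ y ∉ p.2 ∧ ∃ z ∈ p.2, G.Adj z y) := by
    rintro ⟨u, U⟩ hp
    rw [Finset.mem_sigma] at hp
    obtain ⟨huS, hU⟩ := hp
    rw [mem_Cset] at hU
    obtain ⟨hUR, hUconn, hins⟩ := hU
    rw [Finset.insert_subset_iff] at hins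
    have hxU : x ∈ U := hins.1
    have huR : u ∈ R := (Finset.mem_erase.1 (hS huS)).2
    have huU : u ∉ U := fun h => (Finset.mem_erase.1 (hUR h)).1 rfl
    obtain ⟨W, hW⟩ := hR.reach hx huR
    obtain ⟨y, hysupp, hyU, z, hzU, hadj⟩ := first_exit W hxU huU
    exact ⟨huS, hUR, hUconn, hxU, hins.2, ⟨y, hW y hysupp, hyU, z, hzU, hadj⟩⟩
  apply Finset.card_le_card_of_injOn (fun p => bndry G p.2 R x)
  · intro p hp
    obtain ⟨_, _, _, hxU, _, hex⟩ := hfacts p hp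
    obtain ⟨hyR, hyU, _⟩ := bndry_spec hex
    exact Finset.mem_erase.2 ⟨fun h => hyU (by rw [show bndry G p.2 R x = x from h]; exact hxU), hyR⟩
  · rintro ⟨u, U⟩ hp ⟨u', U'⟩ hq heq
    simp only [Finset.coe_sigma, Set.mem_sigma_iff] at hp hq
    have hp' : (⟨u, U⟩ : Σ _ : V, Finset V) ∈
        S.sigma (fun u => Cset G (R.erase u) (S.erase u) x) := by
      rw [Finset.mem_sigma]; exact ⟨hp.1, hp.2⟩
    have hq' : (⟨u', U'⟩ : Σ _ : V, Finset V) ∈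
        S.sigma (fun u => Cset G (R.erase u) (S.erase u) x) := by
      rw [Finset.mem_sigma]; exact ⟨hq.1, hq.2⟩
    obtain ⟨huS, hUR, hUconn, hxU, hSU, hex⟩ := hfacts _ hp'
    obtain ⟨huS', hUR', hUconn', hxU', hSU', hex'⟩ := hfacts _ hq'
    obtain ⟨hyR, hyU, hyb⟩ := bndry_spec (G := G) (x := x) hex
    obtain ⟨hyR', hyU', hyb'⟩ := bndry_spec (G := G) (x := x) hex'
    simp only at heq
    -- `buniq X …` : any boundary vertex of the pair (u'', X) equals `bndry G X R x`
    have buniq : ∀ (u'' : V), u'' ∈ S → ∀ (X : Finset V), X ⊆ R.erase u'' → connF G X →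
        x ∈ X → S.erase u'' ⊆ X →
        (∃ y, y ∈ R ∧ y ∉ X ∧ ∃ z ∈ X, G.Adj z y) →
        ∀ y', y' ∈ R → y' ∉ X → (∃ z ∈ X, G.Adj z y') → y' = bndry G X R x := by
      intro u'' hu'' X h1 h2 h3 h4 hexX y' hy'1 hy'2 hy'3
      obtain ⟨hb1, hb2, hb3⟩ := bndry_spec (G := G) (x := x) hexX
      exact bnd_unique hR hx hS hstuck hu'' h2 h1 h3 h4 hy'1 hy'2 hy'3 hb1 hb2 hb3
    by_cases huu : u = u'
    · subst huu
      have hUU : U = U' := by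
        by_contra hUU
        by_cases hsub : U' ⊆ U
        · have hsub2 : ¬ U ⊆ U' := fun h => hUU (Finset.Subset.antisymm h hsub)
          obtain ⟨v, hvU, hvU'⟩ := Finset.not_subset.1 hsub2
          -- boundary of U' found inside U
          obtain ⟨WX, hWX⟩ := hUconn.reach hxU hvU
          obtain ⟨y'', hy''supp, hy''U', z'', hz''U', hadj''⟩ := first_exit WX hxU' hvU'
          have h1 := buniq u huS' U' hUR' hUconn' hxU' hSU' hex' y''
            ((Finset.mem_erase.1 (hUR (hWX y'' hy''supp))).2) hy''U' ⟨z'', hz''U', hadj''⟩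
          rw [← heq] at h1
          exact hyU (h1 ▸ hWX y'' hy''supp)
        · obtain ⟨v, hvU', hvU⟩ := Finset.not_subset.1 hsub
          obtain ⟨WX, hWX⟩ := hUconn'.reach hxU' hvU'
          obtain ⟨y'', hy''supp, hy''U, z'', hz''U, hadj''⟩ := first_exit WX hxU hvU
          have h1 := buniq u huS U hUR hUconn hxU hSU hex y''
            ((Finset.mem_erase.1 (hUR' (hWX y'' hy''supp))).2) hy''U ⟨z'', hz''U, hadj''⟩
          rw [heq] at h1
          exact hyU' (h1 ▸ hWX y'' hy''supp)
      subst hUU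
      rfl
    · exfalso
      have hu'U : u' ∈ U := hSU (Finset.mem_erase.2 ⟨fun h => huu h.symm, huS'⟩)
      have hu'U' : u' ∉ U' := fun h => (Finset.mem_erase.1 (hUR' h)).1 rfl
      obtain ⟨WX, hWX⟩ := hUconn.reach hxU hu'U
      obtain ⟨y'', hy''supp, hy''U', z'', hz''U', hadj''⟩ := first_exit WX hxU' hu'U'
      have h1 := buniq u' huS' U' hUR' hUconn' hxU' hSU' hex' y''
        ((Finset.mem_erase.1 (hUR (hWX y'' hy''supp))).2) hy''U' ⟨z'', hz''U', hadj''⟩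
      rw [← heq] at h1
      exact hyU (h1 ▸ hWX y'' hy''supp)

theorem Cset_filter_not_mem (R S : Finset V) (x w : V) :
    (Cset G R S x).filter (fun U => w ∉ U) = Cset G (R.erase w) S x := by
  ext U
  simp only [Finset.mem_filter, mem_Cset, Finset.subset_erase]
  tauto

theorem Cset_filter_mem (R S : Finset V) (x w : V) :
    (Cset G R S x).filter (fun U => w ∈ U) = Cset G R (insert w S) x := by
  ext U
  simp only [Finset.mem_filter, mem_Cset, Finset.insert_subset_iff]
  tauto

theorem Cset_card_split (R S : Finset V) (x w : V) :
    (Cset G R S x).card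
      = (Cset G (R.erase w) S x).card + (Cset G R (insert w S) x).card := by
  rw [← Cset_filter_not_mem, ← Cset_filter_mem, add_comm]
  exact (Finset.card_filter_add_card_filter_not (p := fun U => w ∈ U)).symm

theorem Cset_sum_split (R S : Finset V) (x w : V) :
    ∑ U ∈ Cset G R S x, U.card
      = (∑ U ∈ Cset G (R.erase w) S x, U.card)
        + ∑ U ∈ Cset G R (insert w S) x, U.card := by
  rw [← Cset_filter_not_mem, ← Cset_filter_mem, add_comm]
  exact (Finset.sum_filter_add_sum_filter_not (Cset G R S x) (fun U => w ∈ U) _).symm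

theorem Mrec : ∀ (k : ℕ) (R S : Finset V) (x : V), R.card + (R \ S).card ≤ k →
    connF G R → x ∈ R → S ⊆ R.erase x →
    (R.card + 1) * (Cset G R S x).card
        + ∑ u ∈ S, (Cset G (R.erase u) (S.erase u) x).card
      ≤ 2 * ∑ U ∈ Cset G R S x, U.card := by
  intro k
  induction k with
  | zero =>
    intro R S x hk _ hx _
    have h0 : R.card = 0 := by omega
    rw [Finset.card_eq_zero] at h0
    subst h0
    simp at hx
  | succ k ih =>
    intro R S x hk hR hx hS
    by_cases hns : ∃ w, w ∈ R ∧ w ∉ insert x S ∧ connF G (R.erase w)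
    · obtain ⟨w, hwR, hwn, hwconn⟩ := hns
      have hwx : w ≠ x := fun h => hwn (h ▸ Finset.mem_insert_self x S)
      have hwS : w ∉ S := fun h => hwn (Finset.mem_insert_of_mem h)
      have hc1 : (R.erase w).card + 1 = R.card := Finset.card_erase_add_one hwR
      have hwRS : w ∈ R \ S := Finset.mem_sdiff.2 ⟨hwR, hwS⟩
      have hsd1 : (R.erase w) \ S = (R \ S).erase w := by
        ext t
        simp only [Finset.mem_erase, Finset.mem_sdiff]
        tauto
      have hsd2 : R \ insert w S = (R \ S).erase w := by
        ext t
        simp only [Finset.mem_erase, Finset.mem_sdiff, Finset.mem_insert]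
        tauto
      have hc2 : ((R \ S).erase w).card + 1 = (R \ S).card := Finset.card_erase_add_one hwRS
      have hxw : x ∈ R.erase w := Finset.mem_erase.2 ⟨Ne.symm hwx, hx⟩
      have hS1 : S ⊆ (R.erase w).erase x := by
        intro s hs
        have h1 := hS hs
        rw [Finset.mem_erase] at h1 ⊢
        exact ⟨h1.1, Finset.mem_erase.2 ⟨fun h => hwS (h ▸ hs), h1.2⟩⟩
      have IH1 := ih (R.erase w) S x (by rw [hsd1]; omega) hwconn hxw hS1
      have hins2 : insert w S ⊆ R.erase x :=
        Finset.insert_subset_iff.2 ⟨Finset.mem_erase.2 ⟨hwx, hwR⟩, hS⟩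
      have IH2 := ih R (insert w S) x (by rw [hsd2]; omega) hR hx hins2
      -- rewrite the inner sum of IH2
      rw [Finset.sum_insert hwS, Finset.erase_insert hwS] at IH2
      have hcongr2 : ∀ u ∈ S,
          (Cset G (R.erase u) ((insert w S).erase u) x).card
            = (Cset G (R.erase u) (insert w (S.erase u)) x).card := by
        intro u hu
        rw [Finset.erase_insert_of_ne (show w ≠ u from fun h => hwS (by rw [h]; exact hu))]
      rw [Finset.sum_congr rfl hcongr2] at IH2
      -- split the goal
      rw [Cset_card_split R S x w, Cset_sum_split R S x w]
      have hsplitu : ∀ u ∈ S,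
          (Cset G (R.erase u) (S.erase u) x).card
            = (Cset G ((R.erase w).erase u) (S.erase u) x).card
              + (Cset G (R.erase u) (insert w (S.erase u)) x).card := by
        intro u hu
        rw [Cset_card_split (R.erase u) (S.erase u) x w, Finset.erase_right_comm]
      rw [Finset.sum_congr rfl hsplitu, Finset.sum_add_distrib]
      rw [← hc1] at *
      set m := (R.erase w).card with hm
      set c1 := (Cset G (R.erase w) S x).card
      set c2 := (Cset G R (insert w S) x).card
      set s1 := ∑ U ∈ Cset G (R.erase w) S x, U.card
      set s2 := ∑ U ∈ Cset G R (insert w S) x, U.card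
      set A := ∑ u ∈ S, (Cset G ((R.erase w).erase u) (S.erase u) x).card
      set B := ∑ u ∈ S, (Cset G (R.erase u) (insert w (S.erase u)) x).card
      calc (m + 1 + 1) * (c1 + c2) + (A + B)
          = ((m + 1) * c1 + A) + ((m + 1 + 1) * c2 + (c1 + B)) := by ring
        _ ≤ 2 * s1 + 2 * s2 := Nat.add_le_add IH1 IH2
        _ = 2 * (s1 + s2) := by ring
    · push_neg at hns
      have hstuck : Stuck G R S x := fun w hw hwn => hns w hw hwn
      rw [stuck_Cset hR hx hS hstuck, Finset.sum_singleton, Finset.card_singleton]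
      have h2 := stuck_sum hR hx hS hstuck
      have hRx : (R.erase x).card + 1 = R.card := Finset.card_erase_add_one hx
      omega

end AvgConnAux

theorem stmt_1 {V : Type*} [Fintype V] (G : SimpleGraph V) (hG : G.Connected) (i : V) :
    (∑ U ∈ (connSets G).filter (fun U => i ∈ U), (U.card : ℝ)) ≥
      ((Fintype.card V + 1) / 2) * ((connSets G).filter (fun U => i ∈ U)).card := by
  classical
  have hconnuniv : AvgConnAux.connF G Finset.univ := by
    rw [AvgConnAux.connF_iff]
    refine ⟨⟨i, Finset.mem_univ i⟩, fun a _ b _ => ?_⟩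
    obtain ⟨w⟩ := hG.preconnected a b
    exact ⟨w, fun v _ => Finset.mem_univ v⟩
  have hset : (connSets G).filter (fun U => i ∈ U) = AvgConnAux.Cset G Finset.univ ∅ i := by
    ext U
    simp only [connSets, AvgConnAux.mem_Cset, Finset.mem_filter, Finset.mem_univ,
      true_and, Finset.subset_univ, Finset.insert_subset_iff, Finset.empty_subset,
      and_true, AvgConnAux.connF]
    try tauto
  have hM := AvgConnAux.Mrec ((Finset.univ : Finset V).card
      + ((Finset.univ : Finset V) \ ∅).card)
      Finset.univ ∅ i le_rfl hconnuniv (Finset.mem_univ i) (Finset.empty_subset _)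
  simp only [Finset.sum_empty, add_zero, Finset.card_univ] at hM
  rw [ge_iff_le, hset]
  have h3 : (∑ U ∈ AvgConnAux.Cset G Finset.univ ∅ i, (U.card : ℝ))
      = ((∑ U ∈ AvgConnAux.Cset G Finset.univ ∅ i, U.card : ℕ) : ℝ) := by
    push_cast
    try rfl
  rw [h3]
  have h4 := (Nat.cast_le (α := ℝ)).2 hM
  push_cast at h4
  linarith
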